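/- Let Σ be a downward-closed family of subsets of {1,…,d} containing all singletons, with maximal elements Σ_max. For z ∈ ℂ^d, the sum Σ_{σ ∈ Σ_max} ∏_{i ∉ σ} |z_i|² vanishes if and only if {i : z_i = 0} contains a primitive collection of Σ, assuming every element of Σ is contained in some maximal element. -/

import Mathlib

/-- For a downward-closed family `F` containing all singletons, with maximal
elements `Fmax` (every element of `F` contained in a maximal one), the sum
`Σ_{σ ∈ Fmax} ∏_{i ∉ σ} |z_i|²` vanishes iff the zero set of `z` contains a
primitive collection of `F`. -/
theorem stmt12 (d : ℕ) (F Fmax : Finset (Finset (Fin d)))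
    (hdc : ∀ s ∈ F, ∀ t ⊆ s, t ∈ F) (hsing : ∀ i : Fin d, {i} ∈ F)
    (hmax : Fmax ⊆ F) (hcov : ∀ s ∈ F, ∃ σ ∈ Fmax, s ⊆ σ)
    (z : Fin d → ℂ) :
    ∑ σ ∈ Fmax, ∏ i ∈ σᶜ, ‖z i‖ ^ 2 = 0 ↔
      ∃ P : Finset (Fin d), (P ∉ F ∧ ∀ Q ⊂ P, Q ∈ F) ∧ ∀ i ∈ P, z i = 0 := by
  set Z : Finset (Fin d) := Finset.univ.filter (fun i => z i = 0) with hZdef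
  have hsum : (∑ σ ∈ Fmax, ∏ i ∈ σᶜ, ‖z i‖ ^ 2 = 0) ↔
      ∀ σ ∈ Fmax, ∃ i ∈ σᶜ, z i = 0 := by
    rw [Finset.sum_eq_zero_iff_of_nonneg (fun σ _ => by positivity)]
    constructor
    · intro h σ hσ
      obtain ⟨i, hi, hzi⟩ := Finset.prod_eq_zero_iff.mp (h σ hσ)
      refine ⟨i, hi, ?_⟩
      have := (pow_eq_zero_iff two_ne_zero).mp hzi
      simpa using this
    · intro h σ hσ
      obtain ⟨i, hi, hzi⟩ := h σ hσ
      exact Finset.prod_eq_zero hi (by simp [hzi])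
  rw [hsum]
  constructor
  · intro h
    have hZF : Z ∉ F := by
      intro hZin
      obtain ⟨σ, hσ, hsub⟩ := hcov Z hZin
      obtain ⟨i, hi, hzi⟩ := h σ hσ
      have : i ∈ Z := by simp [hZdef, hzi]
      exact (Finset.mem_compl.mp hi) (hsub this)
    -- take minimal-cardinality subset of Z not in F
    have hne : (Z.powerset.filter (fun Q => Q ∉ F)).Nonempty :=
      ⟨Z, by simp [hZF]⟩
    obtain ⟨P, hPmem, hPmin⟩ :=
      Finset.exists_min_image _ (fun Q => Q.card) hne
    simp only [Finset.mem_filter, Finset.mem_powerset] at hPmem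
    refine ⟨P, ⟨hPmem.2, ?_⟩, ?_⟩
    · intro Q hQ
      by_contra hQF
      have hQmem : Q ∈ Z.powerset.filter (fun Q => Q ∉ F) := by
        simp only [Finset.mem_filter, Finset.mem_powerset]
        exact ⟨hQ.subset.trans hPmem.1, hQF⟩
      have := hPmin Q hQmem
      exact absurd this (not_le.mpr (Finset.card_lt_card hQ))
    · intro i hi
      have : i ∈ Z := hPmem.1 hi
      simpa [hZdef] using this
  · rintro ⟨P, ⟨hPF, _⟩, hPz⟩ σ hσ
    by_contra hc
    push_neg at hc
    have hPσ : P ⊆ σ := fun i hi => by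
      by_contra hiσ
      exact hc i (Finset.mem_compl.mpr hiσ) (hPz i hi)
    exact hPF (hdc σ (hmax hσ) P hPσ)
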